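/- arXiv:2510.16356 — 2 statements merged into one kernel-verified Lean document; each statement's English description precedes it below -/
import Mathlib

section
/- Let d ≥ 1, let v : ℝ × ℝ^d → ℝ^d be continuously differentiable, and let ρ : ℝ × ℝ^d → ℝ be continuously differentiable and strictly positive, satisfying ∂_tρ(t,x) + div_x(ρ(t,x) v(t,x)) = 0 for all (t,x). Let T > 0 and let x : [0,T] → ℝ^d be differentiable with x'(t) = v(t, x(t)) for all t ∈ [0,T]. Then log ρ(T, x(T)) = log ρ(0, x(0)) − ∫_0^T (div_x v)(t, x(t)) dt. -/
/-- The divergence of a vector field `F : ℝᵈ → ℝᵈ`. -/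
noncomputable def dvg {d : ℕ}
    (F : EuclideanSpace ℝ (Fin d) → EuclideanSpace ℝ (Fin d))
    (x : EuclideanSpace ℝ (Fin d)) : ℝ :=
  ∑ i, fderiv ℝ (fun y => F y i) x (EuclideanSpace.single i 1)

section Aux

variable {d : ℕ}

local notation "E" => EuclideanSpace ℝ (Fin d)

/-- divergence via a known full derivative -/
lemma dvg_eq_of_hasFDerivAt {F : E → E} {L : E →L[ℝ] E} {x : E}
    (h : HasFDerivAt F L x) :
    dvg F x = ∑ i, L (EuclideanSpace.single i 1) i := by
  unfold dvg
  refine Finset.sum_congr rfl fun i _ => ?_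
  have hc : HasFDerivAt (fun y => F y i) ((EuclideanSpace.proj i).comp L) x :=
    (EuclideanSpace.proj (𝕜 := ℝ) i).hasFDerivAt.comp x h
  rw [hc.fderiv]
  rfl

lemma sum_single_smul (u : E) :
    ∑ i, u i • EuclideanSpace.single i (1 : ℝ) = u := by
  ext j
  rw [WithLp.ofLp_sum, Finset.sum_apply]
  simp [PiLp.smul_apply, EuclideanSpace.single_apply, Finset.sum_ite_eq]

lemma clm_apply_eq_sum (L : E →L[ℝ] ℝ) (u : E) :
    L u = ∑ i, u i * L (EuclideanSpace.single i 1) := by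
  conv_lhs => rw [← sum_single_smul u]
  rw [map_sum]
  simp [smul_eq_mul]

/-- derivative of partial map in second variable -/
lemma hasFDerivAt_partial_snd {X : Type*} [NormedAddCommGroup X] [NormedSpace ℝ X]
    {F : ℝ × E → X} (hF : ContDiff ℝ 1 F) (t : ℝ) (x : E) :
    HasFDerivAt (fun y => F (t, y))
      ((fderiv ℝ F (t, x)).comp (ContinuousLinearMap.inr ℝ ℝ E)) x := by
  have h1 : HasFDerivAt F (fderiv ℝ F (t, x)) (t, x) :=
    (hF.differentiable one_ne_zero (t, x)).hasFDerivAt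
  exact h1.comp x (hasFDerivAt_prodMk_right t x)

end Aux

/-- **Log-density evolution along trajectories.**
If the strictly positive C¹ density ρ satisfies the continuity equation
∂ₜρ + divₓ(ρv) = 0 for the C¹ velocity field v, then along any trajectory
γ'(t) = v(t, γ(t)) on [0,T] one has
log ρ(T, γ(T)) = log ρ(0, γ(0)) − ∫₀ᵀ (divₓ v)(t, γ(t)) dt. -/
theorem log_density_integral_identity
    (d : ℕ) (hd : 1 ≤ d) (T : ℝ) (hT : 0 < T)
    (v : ℝ → EuclideanSpace ℝ (Fin d) → EuclideanSpace ℝ (Fin d))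
    (hv : ContDiff ℝ 1 (fun p : ℝ × EuclideanSpace ℝ (Fin d) => v p.1 p.2))
    (ρ : ℝ → EuclideanSpace ℝ (Fin d) → ℝ)
    (hρ : ContDiff ℝ 1 (fun p : ℝ × EuclideanSpace ℝ (Fin d) => ρ p.1 p.2))
    (hρpos : ∀ t x, 0 < ρ t x)
    (htransport : ∀ t x,
      deriv (fun s => ρ s x) t + dvg (fun y => ρ t y • v t y) x = 0)
    (γ : ℝ → EuclideanSpace ℝ (Fin d))
    (hγ : ∀ t ∈ Set.Icc (0 : ℝ) T, HasDerivAt γ (v t (γ t)) t) :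
    Real.log (ρ T (γ T))
      = Real.log (ρ 0 (γ 0)) - ∫ t in (0 : ℝ)..T, dvg (v t) (γ t) := by
  have hF : ContDiff ℝ 1 (fun p : ℝ × EuclideanSpace ℝ (Fin d) => v p.1 p.2) := hv
  set φ : ℝ → ℝ := fun t => dvg (v t) (γ t) with hφ
  -- spatial derivatives
  have hvx : ∀ t x, HasFDerivAt (v t)
      ((fderiv ℝ (fun p : ℝ × EuclideanSpace ℝ (Fin d) => v p.1 p.2) (t, x)).comp
        (ContinuousLinearMap.inr ℝ ℝ (EuclideanSpace ℝ (Fin d)))) x := fun t x =>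
    hasFDerivAt_partial_snd hv t x
  have hρx : ∀ t x, HasFDerivAt (fun y => ρ t y)
      ((fderiv ℝ (fun p : ℝ × EuclideanSpace ℝ (Fin d) => ρ p.1 p.2) (t, x)).comp
        (ContinuousLinearMap.inr ℝ ℝ (EuclideanSpace ℝ (Fin d)))) x := fun t x =>
    hasFDerivAt_partial_snd hρ t x
  -- Step 1: derivative of log density along the trajectory
  have key : ∀ t ∈ Set.Icc (0 : ℝ) T,
      HasDerivAt (fun s => Real.log (ρ s (γ s))) (-(φ t)) t := by
    intro t ht
    set x := γ t with hx
    set Dρ := (fderiv ℝ (fun p : ℝ × EuclideanSpace ℝ (Fin d) => ρ p.1 p.2) (t, x)).comp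
        (ContinuousLinearMap.inr ℝ ℝ (EuclideanSpace ℝ (Fin d))) with hDρ
    set Dv := (fderiv ℝ (fun p : ℝ × EuclideanSpace ℝ (Fin d) => v p.1 p.2) (t, x)).comp
        (ContinuousLinearMap.inr ℝ ℝ (EuclideanSpace ℝ (Fin d))) with hDv
    -- divergence of ρ v
    have hprod : HasFDerivAt (fun y => ρ t y • v t y)
        (ρ t x • Dv + Dρ.smulRight (v t x)) x :=
      (hρx t x).smul (hvx t x)
    have hdvg_prod : dvg (fun y => ρ t y • v t y) x
        = Dρ (v t x) + ρ t x * dvg (v t) x := by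
      rw [dvg_eq_of_hasFDerivAt hprod, dvg_eq_of_hasFDerivAt (hvx t x),
        clm_apply_eq_sum Dρ (v t x), Finset.mul_sum, ← Finset.sum_add_distrib]
      refine Finset.sum_congr rfl fun i _ => ?_
      simp only [ContinuousLinearMap.add_apply, ContinuousLinearMap.smul_apply,
        ContinuousLinearMap.smulRight_apply, PiLp.add_apply, PiLp.smul_apply,
        smul_eq_mul, ← hDv]
      ring
    -- time derivative of ρ at fixed x
    have hpt : HasDerivAt (fun s => ρ s x)
        (fderiv ℝ (fun p : ℝ × EuclideanSpace ℝ (Fin d) => ρ p.1 p.2) (t, x) (1, 0)) t := by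
      have h1 : HasDerivAt (fun s : ℝ => ((s, x) : ℝ × EuclideanSpace ℝ (Fin d))) (1, 0) t :=
        HasDerivAt.prodMk (hasDerivAt_id t) (hasDerivAt_const t x)
      exact ((hρ.differentiable one_ne_zero (t, x)).hasFDerivAt).comp_hasDerivAt t h1
    -- derivative of ρ along trajectory
    have htraj : HasDerivAt (fun s => ρ s (γ s))
        (fderiv ℝ (fun p : ℝ × EuclideanSpace ℝ (Fin d) => ρ p.1 p.2) (t, x) (1, v t x)) t := by
      have h1 : HasDerivAt (fun s : ℝ => ((s, γ s) : ℝ × EuclideanSpace ℝ (Fin d)))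
          (1, v t x) t := HasDerivAt.prodMk (hasDerivAt_id t) (hγ t ht)
      exact ((hρ.differentiable one_ne_zero (t, x)).hasFDerivAt).comp_hasDerivAt t h1
    have hsplit : fderiv ℝ (fun p : ℝ × EuclideanSpace ℝ (Fin d) => ρ p.1 p.2) (t, x) (1, v t x)
        = fderiv ℝ (fun p : ℝ × EuclideanSpace ℝ (Fin d) => ρ p.1 p.2) (t, x) (1, 0)
          + Dρ (v t x) := by
      have h0 : ((1 : ℝ), v t x) = ((1 : ℝ), (0 : EuclideanSpace ℝ (Fin d)))
          + ((0 : ℝ), v t x) := by simp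
      rw [h0, map_add]
      rfl
    have htr := htransport t x
    rw [hpt.deriv, hdvg_prod] at htr
    have hval : fderiv ℝ (fun p : ℝ × EuclideanSpace ℝ (Fin d) => ρ p.1 p.2) (t, x) (1, v t x)
        = -(ρ t x * dvg (v t) x) := by
      rw [hsplit]; linarith
    rw [hval] at htraj
    have hlog := htraj.log (ne_of_gt (hρpos t x))
    have hval2 : -(ρ t x * dvg (v t) x) / ρ t x = -(φ t) := by
      have hne : ρ t x ≠ 0 := (hρpos t x).ne'
      show -(ρ t x * dvg (v t) x) / ρ t x = -(dvg (v t) (γ t))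
      rw [← hx, neg_div, mul_comm, mul_div_assoc, div_self hne, mul_one]
    rwa [hval2] at hlog
  -- Step 2: continuity of φ on [0, T]
  have hγc : ContinuousOn γ (Set.Icc 0 T) := fun t ht =>
    (hγ t ht).continuousAt.continuousWithinAt
  have hφc : ContinuousOn φ (Set.Icc 0 T) := by
    have hfc : Continuous (fderiv ℝ (fun p : ℝ × EuclideanSpace ℝ (Fin d) => v p.1 p.2)) :=
      hv.continuous_fderiv one_ne_zero
    have h1 : ContinuousOn
        (fun t => fderiv ℝ (fun p : ℝ × EuclideanSpace ℝ (Fin d) => v p.1 p.2) (t, γ t))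
        (Set.Icc 0 T) := hfc.comp_continuousOn (continuousOn_id.prodMk hγc)
    have h2 : ∀ t, φ t = ∑ i, (fderiv ℝ (fun p : ℝ × EuclideanSpace ℝ (Fin d) => v p.1 p.2)
        (t, γ t)) ((0 : ℝ), EuclideanSpace.single i 1) i := by
      intro t
      show dvg (v t) (γ t) = _
      rw [dvg_eq_of_hasFDerivAt (hvx t (γ t))]
      rfl
    rw [show φ = fun t => ∑ i, (fderiv ℝ (fun p : ℝ × EuclideanSpace ℝ (Fin d) => v p.1 p.2)
        (t, γ t)) ((0 : ℝ), EuclideanSpace.single i 1) i from funext h2]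
    refine continuousOn_finset_sum _ fun i _ => ?_
    have h3 : Continuous fun L : (ℝ × EuclideanSpace ℝ (Fin d)) →L[ℝ] EuclideanSpace ℝ (Fin d) =>
        (L ((0 : ℝ), EuclideanSpace.single i 1)) i :=
      (EuclideanSpace.proj (𝕜 := ℝ) i).continuous.comp
        ((ContinuousLinearMap.apply ℝ (EuclideanSpace ℝ (Fin d))
          ((0 : ℝ), EuclideanSpace.single i 1)).continuous)
    exact h3.comp_continuousOn h1
  -- Step 3: integrate
  have hint : IntervalIntegrable (fun t => -(φ t)) MeasureTheory.volume 0 T := by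
    apply ContinuousOn.intervalIntegrable
    rw [Set.uIcc_of_le hT.le]
    exact hφc.neg
  have heq := intervalIntegral.integral_eq_sub_of_hasDerivAt
    (f := fun s => Real.log (ρ s (γ s))) (f' := fun t => -(φ t))
    (fun t ht => key t (by rwa [Set.uIcc_of_le hT.le] at ht)) hint
  rw [intervalIntegral.integral_neg] at heq
  have hiq : ∫ t in (0:ℝ)..T, dvg (v t) (γ t) = ∫ t in (0:ℝ)..T, φ t := rfl
  rw [hiq]
  linarith [heq]
end

section
/- Let a > 0 and λ, γ ≥ 0, and let y : [0,∞) → ℝ be a differentiable function with y(t) ≥ 0 for all t ≥ 0 and satisfying the differential inequality y'(t) ≤ −a·y(t) − λγ·√a·√(y(t)) for all t ≥ 0. Then for all t ≥ 0, y(t) ≤ ( max{ (√(y(0)) + λγ/√a)·e^{−(a/2)t} − λγ/√a , 0 } )². -/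
/-- **Comparison estimate for accelerated KL decay with an L¹ prior.**
If y ≥ 0 is differentiable on [0,∞) and satisfies
y'(t) ≤ −a·y(t) − λγ·√a·√(y(t)) for all t ≥ 0 (with a > 0, λ, γ ≥ 0), then
y(t) ≤ ( ((√(y(0)) + λγ/√a)·e^{−(a/2)t} − λγ/√a)₊ )² for all t ≥ 0. -/
theorem kl_decay_comparison
    (a lam gam : ℝ) (ha : 0 < a) (hlam : 0 ≤ lam) (hgam : 0 ≤ gam)
    (y : ℝ → ℝ)
    (hdiff : ∀ t ≥ (0 : ℝ), DifferentiableAt ℝ y t)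
    (hnonneg : ∀ t ≥ (0 : ℝ), 0 ≤ y t)
    (hineq : ∀ t ≥ (0 : ℝ),
      deriv y t ≤ -a * y t - lam * gam * Real.sqrt a * Real.sqrt (y t)) :
    ∀ t ≥ (0 : ℝ),
      y t ≤ (max ((Real.sqrt (y 0) + lam * gam / Real.sqrt a)
          * Real.exp (-(a / 2) * t) - lam * gam / Real.sqrt a) 0) ^ 2 := by
  intro t ht
  set c := lam * gam with hc
  have hc0 : 0 ≤ c := mul_nonneg hlam hgam
  have hsa : 0 < Real.sqrt a := Real.sqrt_pos.mpr ha
  have hsa2 : Real.sqrt a * Real.sqrt a = a := Real.mul_self_sqrt ha.le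
  -- Step 1 : G(s) = y(s) * exp(a s) is nonincreasing on [0,∞)
  have hG_anti : AntitoneOn (fun s => y s * Real.exp (a * s)) (Set.Ici 0) := by
    apply antitoneOn_of_deriv_nonpos (convex_Ici 0)
    · intro s hs
      exact ((hdiff s hs).mul (by fun_prop)).continuousAt.continuousWithinAt
    · rw [interior_Ici]
      intro s hs
      exact ((hdiff s hs.le).mul (by fun_prop)).differentiableWithinAt
    · rw [interior_Ici]
      intro s hs
      have hs0 : (0:ℝ) ≤ s := hs.le
      have hexp : HasDerivAt (fun x => Real.exp (a * x)) (Real.exp (a*s) * a) s := by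
        simpa using ((hasDerivAt_id s).const_mul a).exp
      have hG : HasDerivAt (fun s => y s * Real.exp (a * s))
          (deriv y s * Real.exp (a*s) + y s * (Real.exp (a*s) * a)) s :=
        ((hdiff s hs0).hasDerivAt).mul hexp
      rw [hG.deriv]
      have h1 := hineq s hs0
      have h2 : 0 ≤ Real.sqrt (y s) := Real.sqrt_nonneg _
      have h3 : (0:ℝ) < Real.exp (a*s) := Real.exp_pos _
      nlinarith [mul_le_mul_of_nonneg_right h1 h3.le,
        mul_nonneg (mul_nonneg (mul_nonneg hc0 hsa.le) h2) h3.le]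
  rcases eq_or_lt_of_le (hnonneg t ht) with h0 | hpos
  · rw [← h0]; positivity
  · -- y > 0 on [0,t]
    have hypos : ∀ s ∈ Set.Icc (0:ℝ) t, 0 < y s := by
      intro s hs
      have hmono := hG_anti hs.1 ht hs.2
      simp only at hmono
      nlinarith [Real.exp_pos (a*s), Real.exp_pos (a*t),
        mul_pos hpos (Real.exp_pos (a*t))]
    -- Step 2 : F(s) = (√(y s) + c/√a) * exp(a/2 * s) is nonincreasing on [0,t]
    set F : ℝ → ℝ := fun s => (Real.sqrt (y s) + c / Real.sqrt a) * Real.exp (a/2 * s)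
      with hF
    have hF_anti : AntitoneOn F (Set.Icc 0 t) := by
      apply antitoneOn_of_deriv_nonpos (convex_Icc 0 t)
      · intro s hs
        exact (((Real.continuous_sqrt.continuousAt.comp
          (hdiff s hs.1).continuousAt).add continuousAt_const).mul
          (by fun_prop)).continuousWithinAt
      · rw [interior_Icc]
        intro s hs
        have hys : 0 < y s := hypos s ⟨hs.1.le, hs.2.le⟩
        have hsq : HasDerivAt (fun x => Real.sqrt (y x))
            (1 / (2 * Real.sqrt (y s)) * deriv y s) s :=
          (Real.hasDerivAt_sqrt hys.ne').comp s (hdiff s hs.1.le).hasDerivAt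
        have hexp : HasDerivAt (fun x => Real.exp (a/2 * x))
            (Real.exp (a/2*s) * (a/2)) s := by
          simpa using ((hasDerivAt_id s).const_mul (a/2)).exp
        exact ((hsq.add_const _).mul hexp).differentiableAt.differentiableWithinAt
      · rw [interior_Icc]
        intro s hs
        have hys : 0 < y s := hypos s ⟨hs.1.le, hs.2.le⟩
        have hu : 0 < Real.sqrt (y s) := Real.sqrt_pos.mpr hys
        have husq : Real.sqrt (y s) * Real.sqrt (y s) = y s := Real.mul_self_sqrt hys.le
        have hsq : HasDerivAt (fun x => Real.sqrt (y x))
            (1 / (2 * Real.sqrt (y s)) * deriv y s) s :=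
          (Real.hasDerivAt_sqrt hys.ne').comp s (hdiff s hs.1.le).hasDerivAt
        have hexp : HasDerivAt (fun x => Real.exp (a/2 * x))
            (Real.exp (a/2*s) * (a/2)) s := by
          simpa using ((hasDerivAt_id s).const_mul (a/2)).exp
        have hFd : HasDerivAt F
            ((1 / (2 * Real.sqrt (y s)) * deriv y s) * Real.exp (a/2*s)
              + (Real.sqrt (y s) + c / Real.sqrt a) * (Real.exp (a/2*s) * (a/2))) s :=
          (hsq.add_const _).mul hexp
        rw [hFd.deriv]
        have hd := hineq s hs.1.le
        have hE : (0:ℝ) < Real.exp (a/2*s) := Real.exp_pos _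
        have key : deriv y s + a * (Real.sqrt (y s) * Real.sqrt (y s))
            + a * (c / Real.sqrt a) * Real.sqrt (y s) ≤ 0 := by
          have hca : a * (c / Real.sqrt a) = c * Real.sqrt a := by
            field_simp
            nlinarith [hsa2]
          rw [hca, husq]
          nlinarith [hd]
        have hrw : (1 / (2 * Real.sqrt (y s)) * deriv y s) * Real.exp (a/2*s)
              + (Real.sqrt (y s) + c / Real.sqrt a) * (Real.exp (a/2*s) * (a/2))
            = Real.exp (a/2*s) / (2 * Real.sqrt (y s))
              * (deriv y s + a * (Real.sqrt (y s) * Real.sqrt (y s))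
                + a * (c / Real.sqrt a) * Real.sqrt (y s)) := by
          field_simp
          linear_combination
        rw [hrw]
        exact mul_nonpos_of_nonneg_of_nonpos (by positivity) key
    -- Conclude
    have hFt : F t ≤ F 0 := hF_anti (Set.left_mem_Icc.mpr ht) (Set.right_mem_Icc.mpr ht) ht
    have hF0 : F 0 = Real.sqrt (y 0) + c / Real.sqrt a := by
      simp [hF]
    have hEE : Real.exp (a/2*t) * Real.exp (-(a/2)*t) = 1 := by
      rw [← Real.exp_add]
      ring_nf
      exact Real.exp_zero
    have hmul := mul_le_mul_of_nonneg_right hFt (Real.exp_pos (-(a/2)*t)).le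
    rw [hF0] at hmul
    have h2 : (Real.sqrt (y t) + c / Real.sqrt a)
        * (Real.exp (a/2*t) * Real.exp (-(a/2)*t))
        ≤ (Real.sqrt (y 0) + c / Real.sqrt a) * Real.exp (-(a/2)*t) := by
      rw [← mul_assoc]; exact hmul
    rw [hEE, mul_one] at h2
    have hb : Real.sqrt (y t) ≤ (Real.sqrt (y 0) + c / Real.sqrt a)
        * Real.exp (-(a/2)*t) - c / Real.sqrt a := by linarith
    have hbmax : Real.sqrt (y t) ≤ max ((Real.sqrt (y 0) + c / Real.sqrt a)
        * Real.exp (-(a/2)*t) - c / Real.sqrt a) 0 := hb.trans (le_max_left _ _)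
    calc y t = Real.sqrt (y t) ^ 2 := (Real.sq_sqrt (hnonneg t ht)).symm
      _ ≤ _ := pow_le_pow_left₀ (Real.sqrt_nonneg _) hbmax 2
end
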